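/- An uncountable torsion abelian group that is w-divisible is strongly unbounded: if H is torsion, |H| > ℵ₀, and |nH| = |H| for all positive integers n, then H contains a direct sum of |H|-many unbounded subgroups. -/

import Mathlib

/-- The subgroup `nG = {n • g : g ∈ G}` of an abelian group `G`. -/
def nsmulRange (n : ℕ) (G : Type) [AddCommGroup G] : AddSubgroup G :=
  (n • AddMonoidHom.id G).range

/-- An abelian group is `w`-divisible if `|nG| = |G|` for every positive integer `n`. -/
def WDivisible (G : Type) [AddCommGroup G] : Prop :=
  ∀ n : ℕ, 0 < n → Cardinal.mk ↥(nsmulRange n G) = Cardinal.mk G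

/-- An abelian group is strongly unbounded if it contains an internal direct sum
`⊕_{i ∈ I} A_i` of subgroups with `|I| = |G|` and each `A_i` unbounded
(of infinite exponent). -/
def StronglyUnbounded (G : Type) [AddCommGroup G] : Prop :=
  ∃ (I : Type) (A : I → AddSubgroup G), Cardinal.mk I = Cardinal.mk G ∧
    iSupIndep A ∧ ∀ i, ∀ n : ℕ, 0 < n → ∃ a ∈ A i, n • a ≠ 0


open Cardinal Set

section CardAux

/-- Fiber counting lemma. -/
lemma mk_le_mul_of_fiber_le {α β : Type} (f : α → β) (c : Cardinal)
    (h : ∀ b : β, #(f ⁻¹' {b}) ≤ c) : #α ≤ #β * c := by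
  calc #α = #(Σ b : β, f ⁻¹' {b}) := Cardinal.mk_congr (Equiv.sigmaFiberEquiv f).symm
    _ = Cardinal.sum (fun b : β => #(f ⁻¹' {b})) := Cardinal.mk_sigma _
    _ ≤ Cardinal.sum (fun _ : β => c) := Cardinal.sum_le_sum _ _ h
    _ = #β * c := Cardinal.sum_const' β c

/-- Cardinality of an additive subgroup closure. -/
lemma mk_addSubgroup_closure_le {H : Type} [AddCommGroup H] (S : Set H) :
    #(AddSubgroup.closure S) ≤ max #S ℵ₀ := by
  classical
  rcases isEmpty_or_nonempty S with hS | hS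
  · rw [Set.isEmpty_coe_sort.mp hS, AddSubgroup.closure_empty]
    refine le_trans ?_ (le_max_right _ _)
    have : #((⊥ : AddSubgroup H)) = 1 := by
      simp
    rw [this]
    exact le_of_lt Cardinal.one_lt_aleph0
  let φ : List (ℤ × S) → H := fun l => (l.map fun p => p.1 • (p.2 : H)).sum
  have hrange : (AddSubgroup.closure S : Set H) ⊆ Set.range φ := by
    have : AddSubgroup.closure S ≤
        { carrier := Set.range φ
          zero_mem' := ⟨[], rfl⟩
          add_mem' := by
            rintro a b ⟨la, rfl⟩ ⟨lb, rfl⟩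
            exact ⟨la ++ lb, by simp [φ]⟩
          neg_mem' := by
            rintro a ⟨l, rfl⟩
            refine ⟨l.map fun p => (-p.1, p.2), ?_⟩
            simp only [φ, List.map_map]
            induction l with
            | nil => simp
            | cons hd tl ih =>
                simp only [List.map_cons, List.sum_cons, neg_add_rev, Function.comp_def] at *
                rw [ih]
                simp [neg_zsmul, add_comm] } := by
      rw [AddSubgroup.closure_le]
      intro a ha
      exact ⟨[(1, ⟨a, ha⟩)], by simp [φ]⟩
    exact this
  have hZS : #(ℤ × S) ≤ max #S ℵ₀ := by
    have h1 : #(ℤ × S) = ℵ₀ * #S := by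
      rw [Cardinal.mk_prod]
      simp [Cardinal.mk_int]
    rw [h1]
    refine le_trans (Cardinal.mul_le_max _ _) ?_
    apply max_le _ (le_max_right _ _)
    exact max_le (le_max_right _ _) (le_max_left _ _)
  calc #(AddSubgroup.closure S) ≤ #(Set.range φ) := Cardinal.mk_le_mk_of_subset hrange
    _ ≤ #(List (ℤ × S)) := Cardinal.mk_range_le
    _ = max #(ℤ × S) ℵ₀ := Cardinal.mk_list_eq_max_mk_aleph0 _
    _ ≤ max #S ℵ₀ := max_le (le_trans hZS le_rfl) (le_max_right _ _)

/-- Counting lemma for torsion groups: bounded by `p`-socles. -/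
lemma torsion_mk_le (G : Type) [AddCommGroup G]
    (htor : ∀ x : G, ∃ n : ℕ, 0 < n ∧ n • x = 0)
    (c : Cardinal) (hc : ℵ₀ ≤ c)
    (hp : ∀ p : ℕ, p.Prime → #{x : G // p • x = 0} ≤ c) : #G ≤ c := by
  classical
  set T : ℕ → Set G := fun n => {x | n • x = 0} with hTdef
  have hT : ∀ n : ℕ, 0 < n → #(T n) ≤ c := by
    intro n
    induction n using Nat.strong_induction_on with
    | _ n ih =>
      intro hn
      rcases eq_or_lt_of_le (Nat.one_le_iff_ne_zero.mpr hn.ne') with h1 | h1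
      · subst h1
        have hsub : T 1 ⊆ {0} := by
          intro x hx
          have : (1 : ℕ) • x = 0 := hx
          simpa using this
        calc #(T 1) ≤ #({0} : Set G) := Cardinal.mk_le_mk_of_subset hsub
          _ ≤ 1 := by simp
          _ ≤ c := le_trans Cardinal.one_le_aleph0 hc
      · obtain ⟨p, pp, pdvd⟩ := (n).exists_prime_and_dvd (by omega)
        obtain ⟨m, rfl⟩ := pdvd
        have hm : 0 < m := by
          rcases Nat.eq_zero_or_pos m with h | h
          · simp [h] at hn
          · exact h
        have hmn : m < p * m := by
          have := pp.two_le; nlinarith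
        have key : #(T (p * m)) ≤ #(T m) * c := by
          have hmem : ∀ x : T (p * m), p • (x : G) ∈ T m := by
            intro x
            have hx : (p * m) • (x : G) = 0 := x.2
            show m • (p • (x : G)) = 0
            rw [smul_smul, mul_comm]
            exact hx
          let f : T (p * m) → T m := fun x => ⟨p • (x : G), hmem x⟩
          refine mk_le_mul_of_fiber_le f c ?_
          intro b
          rcases isEmpty_or_nonempty (f ⁻¹' {b}) with hb | hb
          · simp [Cardinal.mk_eq_zero]
          · obtain ⟨x0⟩ := hb
            have hinj : Function.Injective (fun x : f ⁻¹' {b} =>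
                (⟨(x : T (p * m)).1 - (x0 : T (p * m)).1, by
                  have hx : f x = b := x.2
                  have hx0 : f x0 = b := x0.2
                  have : p • ((x : T (p * m)) : G) = p • ((x0 : T (p * m)) : G) := by
                    have e1 : p • ((x : T (p * m)) : G) = (b : G) := congrArg Subtype.val hx
                    have e2 : p • ((x0 : T (p * m)) : G) = (b : G) := congrArg Subtype.val hx0
                    rw [e1, e2]
                  show p • ((x : T (p*m)).1 - (x0 : T (p*m)).1) = 0
                  rw [smul_sub, this, sub_self]⟩ : {y : G // p • y = 0})) := by
              intro a b2 hab
              have := congrArg Subtype.val hab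
              simp only [sub_left_inj] at this
              exact Subtype.ext (Subtype.ext this)
            exact le_trans (Cardinal.mk_le_of_injective hinj) (hp p pp)
        calc #(T (p * m)) ≤ #(T m) * c := key
          _ ≤ c * c := mul_le_mul' (ih m hmn hm) le_rfl
          _ = c := Cardinal.mul_eq_self hc
  have hcover : (Set.univ : Set G) ⊆ ⋃ n : ℕ, T (n + 1) := by
    intro x _
    obtain ⟨n, hn, hx⟩ := htor x
    refine Set.mem_iUnion.mpr ⟨n - 1, ?_⟩
    show (n - 1 + 1) • x = 0
    have he : n - 1 + 1 = n := Nat.succ_pred_eq_of_pos hn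
    rw [he]; exact hx
  calc #G = #(Set.univ : Set G) := Cardinal.mk_univ.symm
    _ ≤ #(⋃ n : ℕ, T (n + 1)) := Cardinal.mk_le_mk_of_subset hcover
    _ ≤ #ℕ * ⨆ n : ℕ, #(T (n + 1)) := Cardinal.mk_iUnion_le _
    _ ≤ ℵ₀ * c := by
        apply mul_le_mul' (by simp)
        exact ciSup_le' fun n => hT (n + 1) (Nat.succ_pos n)
    _ = c := by
        rw [Cardinal.mul_eq_max le_rfl hc, max_eq_right hc]

end CardAux


/-- The key extension lemma: given a small subgroup `E`, there is `y` of large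
prime-power order whose cyclic group meets `E` trivially. -/
lemma exists_good (H : Type) [AddCommGroup H]
    (htor : ∀ x : H, ∃ n : ℕ, 0 < n ∧ n • x = 0)
    (huncount : ℵ₀ < #H) (hwdiv : WDivisible H)
    (E : AddSubgroup H) (hE : #E < #H) (n : ℕ) (hn : 0 < n) :
    ∃ y : H, (∀ m : ℕ, 0 < m → m ≤ n → m • y ≠ 0) ∧ ∀ c : ℤ, c • y ∈ E → c • y = 0 := by
  classical
  set N : ℕ := (Nat.factorial n) ^ n with hNdef
  have hN : 0 < N := pow_pos (Nat.factorial_pos n) n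
  set R : AddSubgroup H := nsmulRange N H with hRdef
  have hR : #R = #H := hwdiv N hN
  set c : Cardinal := max #E ℵ₀ with hcdef
  have hcH : c < #H := max_lt hE huncount
  have hcinf : ℵ₀ ≤ c := le_max_right _ _
  -- torsion of R
  have hRtor : ∀ x : R, ∃ k : ℕ, 0 < k ∧ k • x = 0 := by
    intro x
    obtain ⟨k, hk, hx⟩ := htor (x : H)
    exact ⟨k, hk, by ext; simpa using hx⟩
  -- find a prime with a large socle inside R
  have hprime : ∃ p : ℕ, p.Prime ∧ c < #{v : R // p • v = 0} := by
    by_contra hcon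
    push_neg at hcon
    have : #R ≤ c := torsion_mk_le R hRtor c hcinf fun p pp => hcon p pp
    rw [hR] at this
    exact absurd this (not_le.mpr hcH)
  obtain ⟨p, pp, hpc⟩ := hprime
  -- find a socle element outside E
  have hv : ∃ v : {v : R // p • v = 0}, ((v : R) : H) ∉ E := by
    by_contra hcon
    push_neg at hcon
    have hinj : Function.Injective (fun v : {v : R // p • v = 0} =>
        (⟨((v : R) : H), hcon v⟩ : E)) := by
      intro a b hab
      have h2 := congrArg (fun t : E => (t : H)) hab
      simp only at h2
      exact Subtype.ext (Subtype.ext h2)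
    have : #{v : R // p • v = 0} ≤ #E := Cardinal.mk_le_of_injective hinj
    exact absurd (lt_of_lt_of_le hpc this) (not_lt.mpr (le_max_left _ _))
  obtain ⟨⟨⟨v, hvR⟩, hvp⟩, hvE⟩ := hv
  have hvp' : p • v = 0 := by
    have := congrArg Subtype.val hvp
    simpa using this
  have hv0 : v ≠ 0 := fun h => hvE (h ▸ E.zero_mem)
  -- v = N • z
  obtain ⟨z, hz⟩ : ∃ z : H, N • z = v := by
    obtain ⟨z, hz⟩ := hvR
    exact ⟨z, by simpa using hz⟩
  set a : ℕ := N.factorization p with hadef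
  set u : ℕ := N / p ^ a with hudef
  have hpu : p ^ a * u = N := Nat.ordProj_mul_ordCompl_eq_self N p
  set y : H := u • z with hydef
  have h1 : (p ^ a) • y = v := by
    rw [hydef, smul_smul, hpu, hz]
  have h2 : (p ^ (a + 1)) • y = 0 := by
    rw [pow_succ, mul_comm, mul_smul, h1, hvp']
  have hordy : addOrderOf y = p ^ (a + 1) := by
    haveI : Fact p.Prime := ⟨pp⟩
    refine addOrderOf_eq_prime_pow ?_ h2
    rw [h1]; exact hv0
  -- p ^ (a+1) > n
  have hlarge : n < p ^ (a + 1) := by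
    rcases le_or_gt p n with hpn | hpn
    · have hdvd : p ∣ Nat.factorial n := Nat.dvd_factorial pp.pos hpn
      have hfa : 1 ≤ (Nat.factorial n).factorization p := by
        have := (Nat.Prime.factorization_pos_of_dvd pp (Nat.factorial_ne_zero n) hdvd)
        omega
      have ha : n ≤ a := by
        rw [hadef, hNdef, Nat.factorization_pow]
        simp only [Finsupp.smul_apply, smul_eq_mul]
        calc n = n * 1 := (mul_one n).symm
          _ ≤ n * (Nat.factorial n).factorization p := Nat.mul_le_mul_left n hfa
      calc n < 2 ^ n := Nat.lt_two_pow_self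
        _ ≤ 2 ^ (a + 1) := Nat.pow_le_pow_right (by norm_num) (by omega)
        _ ≤ p ^ (a + 1) := Nat.pow_le_pow_left pp.two_le _
    · calc n < p := hpn
        _ ≤ p ^ (a + 1) := Nat.le_self_pow (by omega) p
  refine ⟨y, ?_, ?_⟩
  · intro m hm hmn hmy
    have : addOrderOf y ∣ m := addOrderOf_dvd_of_nsmul_eq_zero hmy
    have := Nat.le_of_dvd hm this
    omega
  · intro co hco
    set q : ℕ := p ^ (a + 1) with hqdef
    have hq1 : 1 < q := by
      calc 1 ≤ n := hn
        _ < q := hlarge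
    -- reduce to a natural number smul
    set m : ℕ := (co % (q : ℤ)).toNat with hmdef
    have hmq : m < q := by
      have h0 : (0:ℤ) < (q:ℤ) := by exact_mod_cast (by omega : 0 < q)
      have := Int.emod_lt_of_pos co h0
      have h2 := Int.emod_nonneg co (by omega : (q:ℤ) ≠ 0)
      omega
    have hcm : co • y = m • y := by
      have e1 : (co % ((addOrderOf y : ℕ) : ℤ)) • y = co • y := mod_addOrderOf_zsmul y co
      rw [hordy] at e1
      rw [← e1, ← natCast_zsmul]
      congr 1
      have h2 := Int.emod_nonneg co (by omega : (q:ℤ) ≠ 0)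
      omega
    rcases Nat.eq_zero_or_pos m with hm0 | hm0
    · rw [hcm, hm0, zero_smul]
    · exfalso
      set b : ℕ := m.factorization p with hbdef
      set u' : ℕ := m / p ^ b with hu'def
      have hbu : p ^ b * u' = m := Nat.ordProj_mul_ordCompl_eq_self m p
      have hba : b ≤ a := by
        by_contra hba
        have : q ∣ p ^ b := pow_dvd_pow p (by omega)
        have : q ∣ m := dvd_trans this ⟨u', hbu.symm⟩
        have := Nat.le_of_dvd hm0 this
        omega
      have hstep : (p ^ (a - b)) • (m • y) = u' • v := by
        rw [smul_smul, ← hbu, ← mul_assoc, ← pow_add]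
        have : a - b + b = a := by omega
        rw [this, mul_comm, mul_smul, h1]
      have hu'E : u' • v ∈ E := by
        rw [← hstep, ← hcm]
        exact AddSubgroup.nsmul_mem E hco _
      have hu'p : ¬ p ∣ u' := Nat.not_dvd_ordCompl pp (by omega)
      have hcop : Nat.Coprime u' p := Nat.Coprime.symm ((Nat.Prime.coprime_iff_not_dvd pp).mpr hu'p)
      obtain ⟨d, -, hd⟩ := Nat.exists_mul_mod_eq_one_of_coprime hcop pp.one_lt
      have hdecomp : u' * d = p * (u' * d / p) + 1 := by
        have := Nat.div_add_mod (u' * d) p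
        omega
      have hfix : (u' * d) • v = v := by
        rw [hdecomp, add_nsmul, one_nsmul]
        have hz0 : (p * (u' * d / p)) • v = 0 := by
          rw [mul_comm, mul_smul, hvp', smul_zero]
        rw [hz0, zero_add]
      have hvmem : v ∈ E := by
        have e2 : (u' * d) • v = d • (u' • v) := by
          rw [smul_smul, mul_comm]
        rw [← hfix, e2]
        exact AddSubgroup.nsmul_mem E hu'E d
      exact hvE hvmem


/-- Finitely supported families with values in independent-by-predecessor submodules
summing to zero are zero. -/
lemma zsum_eq_zero {ι H : Type} [LinearOrder ι] [AddCommGroup H]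
    (M : ι → Submodule ℤ H)
    (hM : ∀ x : ι, ∀ h : H, h ∈ M x → h ∈ (⨆ z, ⨆ _ : z < x, M z) → h = 0)
    (f : ι →₀ H) (hf : ∀ x, f x ∈ M x) (hsum : (f.sum fun _ v => v) = 0) : f = 0 := by
  classical
  by_contra hne
  have hsupp : f.support.Nonempty := Finsupp.support_nonempty_iff.mpr hne
  set x0 : ι := f.support.max' hsupp with hx0
  have hx0mem : x0 ∈ f.support := f.support.max'_mem hsupp
  have hrest : ∑ x ∈ f.support.erase x0, f x ∈ (⨆ z, ⨆ _ : z < x0, M z) := by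
    apply Submodule.sum_mem
    intro x hx
    have hxlt : x < x0 := by
      rcases Finset.mem_erase.mp hx with ⟨hne', hmem⟩
      exact lt_of_le_of_ne (f.support.le_max' x hmem) hne'
    exact le_iSup₂ (f := fun z (_ : z < x0) => M z) x hxlt (hf x)
  have hsplit : f x0 + ∑ x ∈ f.support.erase x0, f x = 0 := by
    rw [Finset.add_sum_erase _ _ hx0mem]
    exact hsum
  have : f x0 ∈ (⨆ z, ⨆ _ : z < x0, M z) := by
    have : f x0 = -∑ x ∈ f.support.erase x0, f x := by
      rw [eq_neg_iff_add_eq_zero]; exact hsplit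
    rw [this]
    exact Submodule.neg_mem _ hrest
  exact Finsupp.mem_support_iff.mp hx0mem (hM x0 (f x0) (hf x0) this)

lemma disjoint_biSup_of_disjoint {ι H : Type} [LinearOrder ι] [AddCommGroup H]
    (M : ι → Submodule ℤ H)
    (hM : ∀ x : ι, ∀ h : H, h ∈ M x → h ∈ (⨆ z, ⨆ _ : z < x, M z) → h = 0)
    (S T : Set ι) (hST : Disjoint S T) :
    Disjoint (⨆ x, ⨆ _ : x ∈ S, M x) (⨆ x, ⨆ _ : x ∈ T, M x) := by
  classical
  rw [Submodule.disjoint_def]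
  intro h h1 h2
  rw [Submodule.mem_iSup_iff_exists_finsupp] at h1 h2
  obtain ⟨f, hf, hfs⟩ := h1
  obtain ⟨g, hg, hgs⟩ := h2
  have hfM : ∀ x, f x ∈ M x := fun x => by
    have := hf x
    by_cases hx : x ∈ S
    · simpa [hx] using this
    · simp [hx] at this; simp [this]
  have hgM : ∀ x, g x ∈ M x := fun x => by
    have := hg x
    by_cases hx : x ∈ T
    · simpa [hx] using this
    · simp [hx] at this; simp [this]
  have hfS : ∀ x, f x ≠ 0 → x ∈ S := fun x hx => by
    by_contra hxS
    have := hf x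
    simp [hxS] at this
    exact hx this
  have hsub : ((f - g).sum fun _ v => v) = 0 := by
    rw [Finsupp.sum_sub_index (fun _ _ _ => rfl), hfs, hgs, sub_self]
  have hfg : f - g = 0 := by
    apply zsum_eq_zero M hM (f - g) _ hsub
    intro x
    rw [Finsupp.sub_apply]
    exact Submodule.sub_mem _ (hfM x) (hgM x)
  have hfeqg : f = g := by rwa [sub_eq_zero] at hfg
  have hf0 : f = 0 := by
    ext x
    by_contra hx
    have hxS := hfS x hx
    have hxT : x ∈ T := by
      by_contra hxT
      have := hg x
      simp [hxT] at this
      rw [hfeqg] at hx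
      exact hx this
    exact (Set.disjoint_left.mp hST hxS) hxT
  rw [← hfs, hf0]
  simp

/-- Grouping a predecessor-independent family of submodules along a map `g`
yields an independent family. -/
lemma grouped_iSupIndep {ι κt H : Type} [LinearOrder ι] [AddCommGroup H]
    (M : ι → Submodule ℤ H)
    (hM : ∀ x : ι, ∀ h : H, h ∈ M x → h ∈ (⨆ z, ⨆ _ : z < x, M z) → h = 0)
    (g : ι → κt) :
    iSupIndep (fun i : κt => ⨆ x, ⨆ _ : g x = i, M x) := by
  intro i
  have key := disjoint_biSup_of_disjoint M hM {x | g x = i} {x | g x ≠ i}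
    (by simp [Set.disjoint_left])
  refine Disjoint.mono ?_ ?_ key
  · exact le_rfl
  · apply iSup₂_le
    intro j hj
    apply iSup₂_le
    intro x hx
    exact le_iSup₂ (f := fun x (_ : x ∈ {x | g x ≠ i}) => M x) x (by simp [hx, hj])


/-- An uncountable torsion `w`-divisible abelian group is strongly unbounded. -/
theorem uncountable_torsion_wDivisible_stronglyUnbounded
    (H : Type) [AddCommGroup H]
    (htor : ∀ x : H, ∃ n : ℕ, 0 < n ∧ n • x = 0)
    (huncount : Cardinal.aleph0 < Cardinal.mk H)
    (hwdiv : WDivisible H) :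
    StronglyUnbounded H := by
  classical
  set κ : Cardinal := #H with hκdef
  have hι : #(κ.ord.ToType) = κ := Cardinal.mk_ord_toType κ
  have hcard : #(κ.ord.ToType × ℕ) = #(κ.ord.ToType) := by
    rw [Cardinal.mk_prod]
    simp only [Cardinal.lift_id, Cardinal.mk_nat, hι]
    exact Cardinal.mul_eq_left (le_of_lt huncount) (le_of_lt huncount) Cardinal.aleph0_ne_zero
  obtain ⟨e⟩ : Nonempty (κ.ord.ToType ≃ κ.ord.ToType × ℕ) := Cardinal.eq.mp hcard.symm
  -- the recursive step
  have key : ∀ (x : κ.ord.ToType) (prev : ∀ z : κ.ord.ToType, z < x → H),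
      ∃ y : H, (∀ m : ℕ, 0 < m → m ≤ (e x).2 + 1 → m • y ≠ 0) ∧
        ∀ c : ℤ, c • y ∈ AddSubgroup.closure
          (⋃ z : Iio x, (AddSubgroup.zmultiples (prev z.1 z.2) : Set H)) → c • y = 0 := by
    intro x prev
    apply exists_good H htor huncount hwdiv _ _ _ (Nat.succ_pos _)
    refine lt_of_le_of_lt (mk_addSubgroup_closure_le _) ?_
    apply max_lt _ huncount
    refine lt_of_le_of_lt (Cardinal.mk_iUnion_le _) ?_
    have hbound : (⨆ z : Iio x, #(AddSubgroup.zmultiples (prev z.1 z.2) : Set H)) ≤ ℵ₀ := by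
      rcases isEmpty_or_nonempty (Iio x) with hem | hne
      · rw [ciSup_of_empty]
        exact bot_le
      · refine ciSup_le' fun z => ?_
        haveI : Countable ((AddSubgroup.zmultiples (prev z.1 z.2) : Set H)) :=
          (inferInstance : Countable (AddSubgroup.zmultiples (prev z.1 z.2)))
        exact Cardinal.mk_le_aleph0
    refine lt_of_le_of_lt (mul_le_mul' le_rfl hbound) ?_
    exact Cardinal.mul_lt_of_lt (le_of_lt huncount) (Cardinal.mk_Iio_ord_toType x) huncount
  choose F hF1 hF2 using key
  let y : κ.ord.ToType → H := WellFounded.fix wellFounded_lt F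
  have hy : ∀ x, y x = F x (fun z _ => y z) := fun x => WellFounded.fix_eq wellFounded_lt F x
  set M : κ.ord.ToType → Submodule ℤ H :=
    fun x => AddSubgroup.toIntSubmodule (AddSubgroup.zmultiples (y x)) with hMdef
  have hprop1 : ∀ x, ∀ m : ℕ, 0 < m → m ≤ (e x).2 + 1 → m • y x ≠ 0 := by
    intro x
    have := hF1 x (fun z _ => y z)
    rwa [← hy x] at this
  have hprop2 : ∀ x, ∀ c : ℤ, c • y x ∈ AddSubgroup.closure
      (⋃ z : Iio x, (AddSubgroup.zmultiples (y z.1) : Set H)) → c • y x = 0 := by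
    intro x
    have := hF2 x (fun z _ => y z)
    rwa [← hy x] at this
  have hdisj : ∀ x : κ.ord.ToType, ∀ h : H, h ∈ M x → h ∈ (⨆ z, ⨆ _ : z < x, M z) → h = 0 := by
    intro x h hmx hsup
    obtain ⟨c, hc⟩ := AddSubgroup.mem_zmultiples_iff.mp
      (show h ∈ AddSubgroup.zmultiples (y x) from hmx)
    have hle : (⨆ z, ⨆ _ : z < x, M z) ≤ AddSubgroup.toIntSubmodule (AddSubgroup.closure
        (⋃ z : Iio x, (AddSubgroup.zmultiples (y z.1) : Set H))) := by
      apply iSup₂_le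
      intro z hz
      intro t ht
      have htz : t ∈ AddSubgroup.zmultiples (y z) := ht
      exact AddSubgroup.subset_closure (Set.mem_iUnion.mpr ⟨⟨z, hz⟩, htz⟩)
    have hcl : h ∈ AddSubgroup.closure
        (⋃ z : Iio x, (AddSubgroup.zmultiples (y z.1) : Set H)) := hle hsup
    rw [← hc]
    exact hprop2 x c (by rw [hc]; exact hcl)
  set A : κ.ord.ToType → AddSubgroup H :=
    fun i => (⨆ x, ⨆ _ : (e x).1 = i, M x).toAddSubgroup with hAdef
  refine ⟨κ.ord.ToType, A, hι, ?_, ?_⟩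
  · have hind := grouped_iSupIndep M hdisj (fun x => (e x).1)
    rw [← iSupIndep_map_orderIso_iff (AddSubgroup.toIntSubmodule (M := H))]
    have heq : (⇑AddSubgroup.toIntSubmodule ∘ A) =
        fun i => ⨆ x, ⨆ _ : (e x).1 = i, M x := by
      funext i
      exact AddSubgroup.toIntSubmodule.apply_symm_apply _
    rw [heq]
    exact hind
  · intro i n hn
    set x : κ.ord.ToType := e.symm (i, n) with hxdef
    refine ⟨y x, ?_, ?_⟩
    · show y x ∈ (⨆ x', ⨆ _ : (e x').1 = i, M x').toAddSubgroup
      have h1 : y x ∈ M x := AddSubgroup.mem_zmultiples (y x)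
      have h2 : (e x).1 = i := by rw [hxdef, Equiv.apply_symm_apply]
      exact le_iSup₂ (f := fun x' (_ : (e x').1 = i) => M x') x h2 h1
    · apply hprop1 x n hn
      have : (e x).2 = n := by rw [hxdef, Equiv.apply_symm_apply]
      omega
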